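/- Let n ∈ ℕ, c > 0, and let a, b ∈ ℝⁿ be unit vectors with ⟨a,b⟩ < 1. Define the hyperbolic inner product D(u,v) = ½·(d(0,u)² + d(0,v)² − d(u,v)²), where d is the rescaled Poincaré distance. Then D(r·a, r·b) tends to −∞ as r tends to 1/√c from the left (so the proposed inner product penalizes pairs of distinct directions approaching the boundary of the Poincaré ball). -/

import Mathlib

open Real
open scoped Classical

/-- Real inverse hyperbolic tangent. -/
noncomputable def artanhP (x : ℝ) : ℝ := (1 / 2) * Real.log ((1 + x) / (1 - x))

/-- Möbius addition on the Poincaré ball of curvature `c`. -/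
noncomputable def mobiusAdd {n : ℕ} (c : ℝ) (u v : EuclideanSpace ℝ (Fin n)) :
    EuclideanSpace ℝ (Fin n) :=
  (1 + 2 * c * (inner ℝ u v : ℝ) + c ^ 2 * ‖u‖ ^ 2 * ‖v‖ ^ 2)⁻¹ •
    ((1 + 2 * c * (inner ℝ u v : ℝ) + c * ‖v‖ ^ 2) • u + (1 - c * ‖u‖ ^ 2) • v)

/-- Logarithmic map at the origin of the Poincaré ball of curvature `c`. -/
noncomputable def plog {n : ℕ} (c : ℝ) (v : EuclideanSpace ℝ (Fin n)) :
    EuclideanSpace ℝ (Fin n) :=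
  if v = 0 then 0 else (artanhP (Real.sqrt c * ‖v‖) / (Real.sqrt c * ‖v‖)) • v

/-- Exponential map at the origin of the Poincaré ball of curvature `c`. -/
noncomputable def pexp {n : ℕ} (c : ℝ) (x : EuclideanSpace ℝ (Fin n)) :
    EuclideanSpace ℝ (Fin n) :=
  if x = 0 then 0 else (Real.tanh (Real.sqrt c * ‖x‖) / (Real.sqrt c * ‖x‖)) • x

/-- The (rescaled) Poincaré distance of curvature `c`. -/
noncomputable def pdist {n : ℕ} (c : ℝ) (u v : EuclideanSpace ℝ (Fin n)) : ℝ :=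
  (1 / Real.sqrt c) * artanhP (Real.sqrt c * ‖mobiusAdd c (-u) v‖)

/-- The hyperbolic inner product `D(u,v) = ½(d(0,u)² + d(0,v)² − d(u,v)²)`. -/
noncomputable def phyperInner {n : ℕ} (c : ℝ) (u v : EuclideanSpace ℝ (Fin n)) : ℝ :=
  (1 / 2) * (pdist c 0 u ^ 2 + pdist c 0 v ^ 2 - pdist c u v ^ 2)

open Filter

lemma tendsto_artanh_atTop : Tendsto artanhP (nhdsWithin 1 (Set.Iio 1)) atTop := by
  have h0 : Tendsto (fun x : ℝ => 1 - x) (nhdsWithin 1 (Set.Iio 1)) (nhdsWithin 0 (Set.Ioi 0)) := by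
    rw [tendsto_nhdsWithin_iff]
    constructor
    · have : Tendsto (fun x : ℝ => 1 - x) (nhds 1) (nhds (1 - 1)) :=
        (Continuous.tendsto (by continuity : Continuous (fun x : ℝ => 1 - x)) 1)
      simp only [sub_self] at this
      exact this.mono_left nhdsWithin_le_nhds
    · filter_upwards [self_mem_nhdsWithin] with x hx
      exact sub_pos.2 (Set.mem_Iio.1 hx)
  have h1 : Tendsto (fun x : ℝ => (1 + x) / (1 - x)) (nhdsWithin 1 (Set.Iio 1)) atTop := by
    simp only [div_eq_mul_inv]
    apply Filter.Tendsto.pos_mul_atTop (show (0:ℝ) < 2 by norm_num)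
    · have : Tendsto (fun x : ℝ => 1 + x) (nhds 1) (nhds (1 + 1)) :=
        (Continuous.tendsto (by continuity) 1)
      norm_num at this
      exact this.mono_left nhdsWithin_le_nhds
    · exact tendsto_inv_nhdsGT_zero.comp h0
  have := Real.tendsto_log_atTop.comp h1
  exact Tendsto.const_mul_atTop (show (0:ℝ) < 1/2 by norm_num) this

lemma mobiusAdd_zero_left {n : ℕ} (c : ℝ) (v : EuclideanSpace ℝ (Fin n)) :
    mobiusAdd c 0 v = v := by
  unfold mobiusAdd
  simp

lemma mobius_norm_sq {n : ℕ} (c : ℝ) (a b : EuclideanSpace ℝ (Fin n))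
    (ha : ‖a‖ = 1) (hb : ‖b‖ = 1) (r : ℝ) (hr : 0 < r) :
    ‖mobiusAdd c (-(r • a)) (r • b)‖^2
      = r^2 * (2 - 2*(inner ℝ a b : ℝ)) / (1 - 2*c*r^2*(inner ℝ a b : ℝ) + c^2*r^4) := by
  set p : ℝ := (inner ℝ a b : ℝ) with hp
  have hinner : (inner ℝ (-(r • a)) (r • b) : ℝ) = -(r^2 * p) := by
    rw [inner_neg_left, real_inner_smul_left, real_inner_smul_right, ← hp]; ring
  have hnu : ‖-(r • a)‖ = r := by
    rw [norm_neg, norm_smul, ha, Real.norm_eq_abs, abs_of_pos hr, mul_one]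
  have hnv : ‖r • b‖ = r := by
    rw [norm_smul, hb, Real.norm_eq_abs, abs_of_pos hr, mul_one]
  unfold mobiusAdd
  rw [hinner, hnu, hnv]
  set α : ℝ := 1 + 2 * c * -(r ^ 2 * p) + c * r ^ 2 with hα
  set β : ℝ := 1 - c * r ^ 2 with hβ
  have hden : 1 + 2 * c * -(r ^ 2 * p) + c ^ 2 * r ^ 2 * r ^ 2 = 1 - 2*c*r^2*p + c^2*r^4 := by ring
  rw [hden, norm_smul]
  rw [mul_pow, Real.norm_eq_abs, sq_abs]
  have hcombo : ‖α • -(r • a) + β • (r • b)‖^2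
      = α^2*r^2 + 2*(α*β)*(-(r^2*p)) + β^2*r^2 := by
    rw [norm_add_sq_real, norm_smul, norm_smul, hnu, hnv, real_inner_smul_left,
      real_inner_smul_right, hinner]
    rw [Real.norm_eq_abs, Real.norm_eq_abs, mul_pow, mul_pow, sq_abs, sq_abs]
    ring
  rw [hcombo]
  have hkey : α^2*r^2 + 2*(α*β)*(-(r^2*p)) + β^2*r^2
      = r^2 * (2 - 2*p) * (1 - 2*c*r^2*p + c^2*r^4) := by
    rw [hα, hβ]; ring
  rw [hkey]
  by_cases hD : (1 - 2*c*r^2*p + c^2*r^4) = 0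
  · rw [hD]; simp
  · field_simp

lemma artanh_decomp (p x : ℝ) (hp : p < 1) (hx0 : 0 < x) (hx1 : x < 1) :
    artanhP (Real.sqrt (x^2*(2-2*p)/(1 - 2*p*x^2 + x^4)))
      = 2 * artanhP x + (1/2) * Real.log
        ((1 + Real.sqrt (x^2*(2-2*p)/(1 - 2*p*x^2 + x^4)))^2 * (1 - 2*p*x^2 + x^4) / (1+x)^4) := by
  set D : ℝ := 1 - 2*p*x^2 + x^4 with hD
  have hDpos : 0 < D := by
    nlinarith [sq_nonneg (1 - x^2), mul_pos (pow_pos hx0 2) (by linarith : (0:ℝ) < 1 - p)]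
  set w : ℝ := Real.sqrt (x^2*(2-2*p)/D) with hwdef
  have hw0 : 0 ≤ w := Real.sqrt_nonneg _
  have hw2 : w^2 = x^2*(2-2*p)/D := by
    rw [hwdef, Real.sq_sqrt]
    exact div_nonneg (mul_nonneg (sq_nonneg _) (by linarith)) hDpos.le
  have h1w2 : 1 - w^2 = (1-x^2)^2/D := by
    rw [hw2, eq_div_iff hDpos.ne', sub_mul, div_mul_cancel₀ _ hDpos.ne', hD]; ring
  have hx2 : 0 < (1-x^2)^2/D := by
    have : (0:ℝ) < 1 - x^2 := by nlinarith
    positivity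
  have hw1 : w < 1 := by nlinarith
  have h1wpos : 0 < 1 - w := by linarith
  have h1xne : (1:ℝ) - x ≠ 0 := by linarith
  have h1xne' : (1:ℝ) + x ≠ 0 := by linarith
  have hw2D : w^2 * D = x^2*(2-2*p) := by
    rw [hw2]; field_simp
  have hfrac : (1+w)/(1-w) = ((1+x)/(1-x))^2 * ((1+w)^2 * D / (1+x)^4) := by
    field_simp
    ring_nf
    linear_combination hw2D - (1+w-w^3)*hD
  unfold artanhP
  rw [hfrac, Real.log_mul (by positivity) (by positivity), Real.log_pow]
  push_cast
  ring

set_option maxHeartbeats 1600000 in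
/-- For distinct unit directions `a, b`, the hyperbolic inner product
`D(r·a, r·b)` tends to `−∞` as `r → (1/√c)⁻`. -/
theorem phyperInner_tendsto_atBot {n : ℕ} (c : ℝ) (hc : 0 < c)
    (a b : EuclideanSpace ℝ (Fin n)) (ha : ‖a‖ = 1) (hb : ‖b‖ = 1)
    (hab : (inner ℝ a b : ℝ) < 1) :
    Filter.Tendsto (fun r : ℝ => phyperInner c (r • a) (r • b))
      (nhdsWithin (1 / Real.sqrt c) (Set.Iio (1 / Real.sqrt c))) Filter.atBot := by
  have hs : 0 < Real.sqrt c := Real.sqrt_pos.2 hc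
  set s : ℝ := Real.sqrt c with hsdef
  have hs2 : s^2 = c := Real.sq_sqrt hc.le
  set p : ℝ := (inner ℝ a b : ℝ) with hp
  have hp1 : p < 1 := hab
  set l := nhdsWithin (1/s) (Set.Iio (1/s)) with hl
  set A : ℝ → ℝ := fun r => artanhP (s*r) with hA
  set D0 : ℝ → ℝ := fun r => 1 - 2*c*r^2*p + c^2*r^4 with hD0
  set w : ℝ → ℝ := fun r => Real.sqrt (c*r^2*(2-2*p)/D0 r) with hw
  set g : ℝ → ℝ := fun r => (1/2)*Real.log ((1 + w r)^2 * D0 r/(1+s*r)^4) with hg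
  have e2 : ∀ r : ℝ, (s*r)^2 = c*r^2 := by
    intro r; rw [mul_pow, hs2]
  have e4 : ∀ r : ℝ, (s*r)^4 = c^2*r^4 := by
    intro r
    have h4 : (s*r)^4 = ((s*r)^2)^2 := by ring
    rw [h4, e2 r]; ring
  have harg : ∀ r : ℝ, (s*r)^2*(2-2*p)/(1 - 2*p*(s*r)^2 + (s*r)^4) = c*r^2*(2-2*p)/D0 r := by
    intro r
    rw [e2 r, e4 r, hD0]
    ring_nf
  have hDeq : ∀ r : ℝ, 1 - 2*p*(c*r^2) + c^2*r^4 = D0 r := by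
    intro r; rw [hD0]; ring
  have hkey : ∀ r ∈ Set.Ioo (0:ℝ) (1/s),
      phyperInner c (r•a) (r•b) = (1/(2*c)) * (-(A r * (2*A r + 4*g r) + (g r)^2)) := by
    intro r hr
    obtain ⟨hr0, hr1⟩ := hr
    have hsr1 : s*r < 1 := by
      have h' := (lt_div_iff₀ hs).1 hr1
      linarith
    have hsr0 : 0 < s*r := mul_pos hs hr0
    have hnra : ‖r • a‖ = r := by
      rw [norm_smul, ha, Real.norm_eq_abs, abs_of_pos hr0, mul_one]
    have hnrb : ‖r • b‖ = r := by
      rw [norm_smul, hb, Real.norm_eq_abs, abs_of_pos hr0, mul_one]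
    have hMsq := mobius_norm_sq c a b ha hb r hr0
    have hwM : s * ‖mobiusAdd c (-(r•a)) (r•b)‖ = w r := by
      have harg2 : c*r^2*(2-2*p)/D0 r = c * ‖mobiusAdd c (-(r•a)) (r•b)‖^2 := by
        rw [hMsq, ← hp, hD0]
        ring
      rw [hw]
      simp only
      rw [harg2, Real.sqrt_mul hc.le, Real.sqrt_sq (norm_nonneg _), hsdef]
    have hp0a : pdist c 0 (r•a) = (1/s)*A r := by
      unfold pdist
      rw [neg_zero, mobiusAdd_zero_left, hnra]
    have hp0b : pdist c 0 (r•b) = (1/s)*A r := by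
      unfold pdist
      rw [neg_zero, mobiusAdd_zero_left, hnrb]
    have hdecomp : artanhP (w r) = 2*A r + g r := by
      have hd := artanh_decomp p (s*r) hp1 hsr0 hsr1
      rw [harg r] at hd
      rw [e2 r, e4 r, hDeq r] at hd
      simp only [hw, hg, hA]
      exact hd
    have hpd : pdist c (r•a) (r•b) = (1/s)*(2*A r + g r) := by
      unfold pdist
      rw [hwM, hdecomp]
    unfold phyperInner
    rw [hp0a, hp0b, hpd]
    have h1s2 : (1/s)^2 = 1/c := by rw [div_pow, one_pow, hs2]
    rw [mul_pow, mul_pow, mul_pow, h1s2]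
    field_simp
    ring
  have hmem : ∀ᶠ r in l, r ∈ Set.Ioo (0:ℝ) (1/s) :=
    Ioo_mem_nhdsLT_of_mem ⟨by positivity, le_refl _⟩
  have hxlim : Tendsto (fun r : ℝ => s*r) l (nhdsWithin 1 (Set.Iio 1)) := by
    rw [tendsto_nhdsWithin_iff]
    constructor
    · have h1 : Tendsto (fun r : ℝ => s*r) (nhds (1/s)) (nhds (s*(1/s))) :=
        (Continuous.tendsto (by continuity) _)
      rw [mul_one_div, div_self hs.ne'] at h1
      exact h1.mono_left nhdsWithin_le_nhds
    · filter_upwards [self_mem_nhdsWithin] with r hr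
      have h2 : s*r < s*(1/s) := (mul_lt_mul_iff_right₀ hs).2 (Set.mem_Iio.1 hr)
      rw [mul_one_div, div_self hs.ne'] at h2
      exact Set.mem_Iio.2 h2
  have hAlim : Tendsto A l atTop := tendsto_artanh_atTop.comp hxlim
  have hxlim' : Tendsto (fun r : ℝ => s*r) l (nhds 1) := hxlim.mono_right nhdsWithin_le_nhds
  -- limit of g via the function G of x = s*r
  have h2p : (0:ℝ) < 2 - 2*p := by linarith
  set G : ℝ → ℝ := fun x =>
    (1 + Real.sqrt (x^2*(2-2*p)/(1 - 2*p*x^2 + x^4)))^2 * (1 - 2*p*x^2 + x^4) / (1+x)^4 with hG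
  have hGcont : ContinuousAt G 1 := by
    rw [hG]
    apply ContinuousAt.div
    · apply ContinuousAt.mul
      · apply ContinuousAt.pow
        apply ContinuousAt.add continuousAt_const
        apply Real.continuous_sqrt.continuousAt.comp
        apply ContinuousAt.div
        · fun_prop
        · fun_prop
        · norm_num; linarith
      · fun_prop
    · fun_prop
    · norm_num
  have hG1 : G 1 = (2-2*p)/4 := by
    rw [hG]
    simp only
    norm_num
    rw [show (1:ℝ) - 2*p + 1 = 2 - 2*p by ring,
      div_self (by linarith : (2:ℝ) - 2*p ≠ 0), Real.sqrt_one]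
    norm_num
    ring
  have hGlim : Tendsto (fun r : ℝ => G (s*r)) l (nhds ((2-2*p)/4)) := by
    rw [← hG1]
    exact hGcont.tendsto.comp hxlim'
  have hgG : ∀ r : ℝ, g r = (1/2)*Real.log (G (s*r)) := by
    intro r
    rw [hg, hG]
    simp only
    rw [harg r, e2 r, e4 r, hDeq r]
  have hglim : Tendsto g l (nhds ((1/2)*Real.log ((2-2*p)/4))) := by
    have hne : (2-2*p)/4 ≠ 0 := ne_of_gt (by linarith)
    have h5 := Filter.Tendsto.const_mul (1/2 : ℝ) ((Real.continuousAt_log hne).tendsto.comp hGlim)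
    exact (h5.congr (fun r => (hgG r).symm))
  -- combine
  have h1 : Tendsto (fun r => 2*A r + 4*g r) l atTop := by
    have h2 := Tendsto.const_mul_atTop (show (0:ℝ) < 2 by norm_num) hAlim
    exact h2.atTop_add (hglim.const_mul 4)
  have h2 : Tendsto (fun r => A r * (2*A r + 4*g r)) l atTop := hAlim.atTop_mul_atTop₀ h1
  have h3 : Tendsto (fun r => A r * (2*A r + 4*g r) + (g r)^2) l atTop :=
    h2.atTop_add (hglim.pow 2)
  have h4 : Tendsto (fun r => (1/(2*c)) * (-(A r * (2*A r + 4*g r) + (g r)^2))) l atBot :=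
    Tendsto.const_mul_atBot (by positivity) (tendsto_neg_atTop_atBot.comp h3)
  exact h4.congr' (hmem.mono fun r hr => (hkey r hr).symm)
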